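/- Let B(z) = z·(z-a₁)(z+\bar{c}a₁)/((1-\bar{a₁}z)(1+c\bar{a₁}z)) with a₁ ∈ 𝔻 \ {0}, |c| = 1 and c + \bar{c} = -1 - |a₁|². Then the group of continuous self-maps M of 𝔻 with B ∘ M = B is generated by M(z) = c(z + \bar{c}a₁)/(1 + c\bar{a₁}z), which has order 3. -/

import Mathlib

open Complex

lemma blaschke_lt' {u v : ℂ} (hu : ‖u‖ < 1) (hv : ‖v‖ < 1) :
    ‖v - u‖ < ‖1 - (starRingEnd ℂ) u * v‖ := by
  have key : normSq (1 - (starRingEnd ℂ) u * v) - normSq (v - u)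
      = (1 - normSq u) * (1 - normSq v) := by
    simp only [normSq_apply, sub_re, sub_im, mul_re, mul_im, one_re, one_im, conj_re, conj_im]
    ring
  have h1 : normSq u < 1 := by
    have := Complex.sq_norm u; nlinarith [norm_nonneg u]
  have h2 : normSq v < 1 := by
    have := Complex.sq_norm v; nlinarith [norm_nonneg v]
  have hlt : normSq (v - u) < normSq (1 - (starRingEnd ℂ) u * v) := by nlinarith
  have e1 := Complex.sq_norm (v - u)
  have e2 := Complex.sq_norm (1 - (starRingEnd ℂ) u * v)
  nlinarith [norm_nonneg (v - u), norm_nonneg (1 - (starRingEnd ℂ) u * v)]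

set_option maxHeartbeats 1000000 in
/-- For `B z = z (z - a₁)(z + conj c · a₁)/((1 - conj a₁ z)(1 + c conj a₁ z))`
with `|c| = 1` and `c + conj c = -1 - |a₁|²`, the group of continuous self-maps
of the disc leaving `B` invariant is generated by
`M z = c (z + conj c · a₁)/(1 + c conj a₁ z)`, which has order `3`. -/
theorem degree_three_invariant_group (a₁ c : ℂ) (ha₁ : ‖a₁‖ < 1)
    (ha₁0 : a₁ ≠ 0) (hc : ‖c‖ = 1)
    (hcc : c + (starRingEnd ℂ) c = -1 - (‖a₁‖ : ℂ) ^ 2)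
    (B : ℂ → ℂ)
    (hB : ∀ z, B z = z * ((z - a₁) / (1 - (starRingEnd ℂ) a₁ * z)) *
      ((z + (starRingEnd ℂ) c * a₁) / (1 + c * (starRingEnd ℂ) a₁ * z)))
    (M : ℂ → ℂ)
    (hM : ∀ z, M z = c * (z + (starRingEnd ℂ) c * a₁) /
      (1 + c * (starRingEnd ℂ) a₁ * z)) :
    (∀ z ∈ Metric.ball (0 : ℂ) 1, B (M z) = B z) ∧
      (∀ z ∈ Metric.ball (0 : ℂ) 1, M^[3] z = z) ∧
      (∃ z ∈ Metric.ball (0 : ℂ) 1, M z ≠ z) ∧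
      (∃ z ∈ Metric.ball (0 : ℂ) 1, M^[2] z ≠ z) ∧
      ∀ N : ℂ → ℂ, ContinuousOn N (Metric.ball (0 : ℂ) 1) →
        Set.MapsTo N (Metric.ball (0 : ℂ) 1) (Metric.ball (0 : ℂ) 1) →
        (∀ z ∈ Metric.ball (0 : ℂ) 1, B (N z) = B z) →
        ∃ j : ℕ, ∀ z ∈ Metric.ball (0 : ℂ) 1, N z = M^[j] z := by
  set b := (starRingEnd ℂ) a₁ with hb
  set k := (starRingEnd ℂ) c with hkdef
  have hmem : ∀ w : ℂ, w ∈ Metric.ball (0 : ℂ) 1 ↔ ‖w‖ < 1 := by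
    intro w; rw [Metric.mem_ball, Complex.dist_eq, sub_zero]
  have habsb : ‖b‖ = ‖a₁‖ := by rw [hb]; exact Complex.norm_conj a₁
  have habsk : ‖k‖ = 1 := by rw [hkdef, Complex.norm_conj, hc]
  have h1 : c * k = 1 := by
    have hnc : Complex.normSq c = 1 := by rw [← Complex.sq_norm, hc]; norm_num
    rw [hkdef, Complex.mul_conj, hnc, ofReal_one]
  have h2 : c + k = -1 - a₁ * b := by
    have ha2 : ((‖a₁‖ : ℝ) : ℂ) ^ 2 = a₁ * b := by
      rw [hb, Complex.mul_conj, ← Complex.sq_norm]; push_cast; ring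
    rw [hcc, ha2]
  have hc0 : c ≠ 0 := by
    intro h; rw [h] at hc; simp at hc
  have hb0 : b ≠ 0 := by rw [hb]; simpa using ha₁0
  have hlt : ∀ w : ℂ, ‖w‖ < 1 → ‖c * b * w‖ < 1 := by
    intro w hw
    rw [norm_mul, norm_mul, hc, one_mul, habsb]
    nlinarith [norm_nonneg w, norm_nonneg a₁]
  have hltb : ∀ w : ℂ, ‖w‖ < 1 → ‖b * w‖ < 1 := by
    intro w hw
    rw [norm_mul, habsb]
    nlinarith [norm_nonneg w, norm_nonneg a₁]
  have hez : ∀ w : ℂ, ‖w‖ < 1 → 1 + c * b * w ≠ 0 := by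
    intro w hw h
    have h1' : c * b * w = -1 := by linear_combination h
    have := hlt w hw
    rw [h1'] at this
    simp at this
  have hdz : ∀ w : ℂ, ‖w‖ < 1 → 1 - b * w ≠ 0 := by
    intro w hw h
    have h1' : b * w = 1 := by linear_combination -h
    have h2' := congrArg (‖·‖) h1'
    simp only [norm_one] at h2'
    have := hltb w hw
    rw [h2'] at this
    norm_num at this
  have h1c : (-1 : ℂ) - c ≠ 0 := by
    intro h
    have hcv : c = -1 := by linear_combination -h
    have hkv : k = -1 := by rw [hkdef, hcv]; simp
    have h2' := h2
    rw [hcv, hkv] at h2'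
    have hab1 : a₁ * b = 1 := by linear_combination h2'
    have h3' := congrArg (‖·‖) hab1
    rw [norm_mul, habsb, norm_one] at h3'
    nlinarith [norm_nonneg a₁]
  have hcab : c + a₁ * b ≠ 0 := by
    intro h
    have hcv : c = -(a₁ * b) := by linear_combination h
    have h3' := congrArg (‖·‖) hcv
    rw [norm_neg, norm_mul, habsb, hc] at h3'
    nlinarith [norm_nonneg a₁]
  -- M maps the ball to itself
  have hMmem : ∀ z ∈ Metric.ball (0 : ℂ) 1, M z ∈ Metric.ball (0 : ℂ) 1 := by
    intro z hz
    rw [hmem] at hz ⊢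
    rw [hM]
    have hu : ‖-(k * a₁)‖ < 1 := by
      rw [norm_neg, norm_mul, habsk, one_mul]; exact ha₁
    have key := blaschke_lt' hu hz
    have hrw1 : z - -(k * a₁) = z + k * a₁ := by ring
    have hrw2 : (1 : ℂ) - (starRingEnd ℂ) (-(k * a₁)) * z = 1 + c * b * z := by
      rw [map_neg, map_mul, hkdef, hb, Complex.conj_conj]; ring
    rw [hrw1, hrw2] at key
    have hden : (0 : ℝ) < ‖1 + c * b * z‖ :=
      norm_pos_iff.mpr (hez z hz)
    rw [norm_div, norm_mul, hc, one_mul]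
    exact (div_lt_one hden).mpr key
  -- the formula for M ∘ M
  have hM2 : ∀ z ∈ Metric.ball (0 : ℂ) 1,
      M (M z) = (c + a₁ * b) * (z - a₁) / ((-1 - c) * (1 - b * z)) := by
    intro z hz
    rw [hmem] at hz
    have hmz : ‖M z‖ < 1 := (hmem _).mp (hMmem z ((hmem z).mpr hz))
    have he2 : 1 + c * b * M z ≠ 0 := hez _ hmz
    have hdz' : 1 - b * z ≠ 0 := hdz z hz
    have hez' : 1 + c * b * z ≠ 0 := hez z hz
    rw [hM (M z)]
    rw [hM z] at he2 ⊢
    rw [div_eq_div_iff he2 (mul_ne_zero h1c hdz')]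
    have hez'' : 1 + c * z * b ≠ 0 := by rwa [mul_right_comm]
    field_simp
    linear_combination (c*z - 2*a₁*c - a₁*c^2 + a₁*b*z - a₁*b*c^2*z + a₁*b^2*c*z^2 + a₁*b^2*c^2*z^2 - a₁^2*b + a₁^2*b*c^2 - a₁^2*b^2*c*z + a₁^3*b^2*c) * h1 + (-c^2*z - a₁*c + a₁*b*c^2*z + a₁^2*b*c) * h2
  -- M has order 3
  have hM3 : ∀ z ∈ Metric.ball (0 : ℂ) 1, M (M (M z)) = z := by
    intro z hz
    have hmm : ‖M (M z)‖ < 1 :=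
      (hmem _).mp (hMmem _ (hMmem z hz))
    rw [hmem] at hz
    have he3 : 1 + c * b * (M (M z)) ≠ 0 := hez _ hmm
    have hdz' : 1 - b * z ≠ 0 := hdz z hz
    have hez' : 1 + c * b * z ≠ 0 := hez z hz
    rw [hM (M (M z))]
    rw [hM2 z ((hmem z).mpr hz)] at he3 ⊢
    rw [div_eq_iff he3]
    field_simp
    linear_combination (-z + b*z^2 - a₁*c + a₁*b*c*z) * h1 + (c*z - b*c*z^2 - a₁*c + a₁*b*c*z) * h2
  -- B is invariant under M
  have hBM : ∀ z ∈ Metric.ball (0 : ℂ) 1, B (M z) = B z := by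
    intro z hz
    have hmz : ‖M z‖ < 1 := (hmem _).mp (hMmem z hz)
    rw [hmem] at hz
    have hdz' : 1 - b * z ≠ 0 := hdz z hz
    have hez' : 1 + c * b * z ≠ 0 := hez z hz
    have hu1 : 1 + c * b * z - b * (c * (z + k * a₁)) ≠ 0 := by
      have hne : 1 - b * M z ≠ 0 := hdz _ hmz
      have heq : 1 + c * b * z - b * (c * (z + k * a₁)) = (1 + c * b * z) * (1 - b * M z) := by
        rw [hM]; field_simp
      rw [heq]
      exact mul_ne_zero hez' hne
    have hu2 : 1 + c * b * z + c * b * (c * (z + k * a₁)) ≠ 0 := by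
      have hne : 1 + c * b * M z ≠ 0 := hez _ hmz
      have heq : 1 + c * b * z + c * b * (c * (z + k * a₁)) = (1 + c * b * z) * (1 + c * b * M z) := by
        rw [hM]; field_simp
      rw [heq]
      exact mul_ne_zero hez' hne
    rw [hB (M z), hB z, hM z]
    have hez'' : 1 + c * z * b ≠ 0 := by rwa [mul_right_comm]
    have hdz'' : 1 - z * b ≠ 0 := by rwa [mul_comm]
    have hu1' : 1 + c * z * b - c * (z + k * a₁) * b ≠ 0 := by
      convert hu1 using 1; ring
    have hu2' : 1 + c * z * b + c ^ 2 * (z + k * a₁) * b ≠ 0 := by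
      convert hu2 using 1; ring
    field_simp
    have r1 : c * (z + k * a₁) - a₁ * (1 + c * z * b) = c * z * (1 - a₁ * b) := by
      linear_combination a₁ * h1
    have r2 : c * (z + k * a₁) + k * a₁ * (1 + c * z * b) = (c + a₁ * b) * (z - a₁) := by
      linear_combination a₁ * h2 + (a₁ + a₁ * b * z) * h1
    have r3 : 1 + c * z * b - c * (z + k * a₁) * b = 1 - a₁ * b := by
      linear_combination -a₁ * b * h1
    have r4 : 1 + c * z * b + c ^ 2 * (z + k * a₁) * b = c ^ 2 * (c + a₁ * b) * (1 - z * b) := by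
      linear_combination (1 - c + z * b * c) * c * h2 + (a₁ * b * c - 1 + c - z * b * c) * h1
    linear_combination (c * (z + k * a₁)) * (1 - z * b) * ((c * (z + k * a₁) + k * a₁ * (1 + c * z * b)) * r1 + (c * z * (1 - a₁ * b)) * r2) - (z * (z + k * a₁) * (z - a₁)) * ((1 + c * z * b + c ^ 2 * (z + k * a₁) * b) * r3 + (1 - a₁ * b) * r4)
  -- the fiber lemma: B identifies exactly the orbits of M
  have hfiber : ∀ z ∈ Metric.ball (0 : ℂ) 1, ∀ w ∈ Metric.ball (0 : ℂ) 1,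
      B w = B z → w = z ∨ w = M z ∨ w = M (M z) := by
    intro z hz w hw hBe
    have hz' : ‖z‖ < 1 := (hmem z).mp hz
    have hw' : ‖w‖ < 1 := (hmem w).mp hw
    have hdz' : 1 - b * z ≠ 0 := hdz z hz'
    have hez' : 1 + c * b * z ≠ 0 := hez z hz'
    have hdw' : 1 - b * w ≠ 0 := hdz w hw'
    have hew' : 1 + c * b * w ≠ 0 := hez w hw'
    rw [hB w, hB z] at hBe
    have hez'' : 1 + c * z * b ≠ 0 := by rwa [mul_right_comm]
    have hdz'' : 1 - z * b ≠ 0 := by rwa [mul_comm]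
    have hew'' : 1 + w * c * b ≠ 0 := by rwa [mul_comm, ← mul_assoc] at hew'
    have hdw'' : 1 - w * b ≠ 0 := by rwa [mul_comm]
    have hez3 : 1 + b * c * z ≠ 0 := by
      convert hez' using 1; ring
    have hew3 : 1 + w * b * c ≠ 0 := by
      convert hew' using 1; ring
    field_simp at hBe
    have key : (w - z) * ((1 + c * b * z) * w - c * (z + k * a₁)) *
        ((-1 - c) * (1 - b * z) * w - (c + a₁ * b) * (z - a₁)) = 0 := by
      linear_combination (-1 - c) * hBe + (-z*w^2 + z^3 + b*z^2*w^2 - b*z^3*w + 2*a₁*w^2 - 2*a₁*z^2 + a₁*c*w^2 - a₁*c*z^2 - a₁*b*z*w^2 + a₁*b*z^2*w - a₁^2*w + a₁^2*z - a₁^2*c*w + a₁^2*c*z + a₁^2*b*z*w - a₁^2*b*z^2 - a₁^2*b^2*z*w^2 + a₁^2*b^2*z^2*w - a₁^2*b^2*c*z*w^2 + a₁^2*b^2*c*z^2*w - a₁^3*b*w + a₁^3*b*z) * h1 + (c*z*w^2 - c*z^3 - b*c*z^2*w^2 + b*c*z^3*w + a₁*w^2 - a₁*z^2 - a₁*c*z*w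 + a₁*c*z^2 - a₁*b*z*w^2 + a₁*b*z^2*w - a₁^2*w + a₁^2*z) * h2
    rcases mul_eq_zero.mp key with h' | h3
    · rcases mul_eq_zero.mp h' with hzz | h2'
      · exact Or.inl (by linear_combination hzz)
      · refine Or.inr (Or.inl ?_)
        rw [hM z, eq_div_iff hez']
        linear_combination h2'
    · refine Or.inr (Or.inr ?_)
      rw [hM2 z hz, eq_div_iff (mul_ne_zero h1c hdz')]
      linear_combination h3
  have hball0 : (0 : ℂ) ∈ Metric.ball (0 : ℂ) 1 := Metric.mem_ball_self one_pos
  have hM0 : M 0 = a₁ := by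
    rw [hM]
    simp only [zero_add, mul_zero, add_zero, div_one]
    linear_combination a₁ * h1
  refine ⟨hBM, ?_, ?_, ?_, ?_⟩
  · -- M^[3] = id
    intro z hz
    show M (M (M z)) = z
    exact hM3 z hz
  · -- M has a non-fixed point
    exact ⟨0, hball0, by rw [hM0]; exact ha₁0⟩
  · -- M ∘ M has a non-fixed point
    refine ⟨0, hball0, ?_⟩
    show M (M 0) ≠ 0
    rw [hM2 0 hball0]
    intro h
    rcases div_eq_zero_iff.mp h with h' | h'
    · rcases mul_eq_zero.mp h' with h'' | h''
      · exact hcab h''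
      · rw [zero_sub, neg_eq_zero] at h''
        exact ha₁0 h''
    · rcases mul_eq_zero.mp h' with h'' | h''
      · exact h1c h''
      · rw [mul_zero, sub_zero] at h''
        exact one_ne_zero h''
  -- the rigidity statement
  intro N hNc hNm hNB
  -- continuity of M on the ball
  have hMcont : ContinuousOn M (Metric.ball (0 : ℂ) 1) := by
    apply ContinuousOn.congr (f := fun z : ℂ => c * (z + k * a₁) / (1 + c * b * z))
    · exact ((continuous_const.mul (continuous_id.add continuous_const)).continuousOn).div
        ((continuous_const.add (continuous_const.mul continuous_id)).continuousOn)
        (fun z hz => hez z ((hmem z).mp hz))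
    · exact fun z _ => hM z
  have hMMcont : ContinuousOn (fun z : ℂ => M (M z)) (Metric.ball (0 : ℂ) 1) :=
    ContinuousOn.comp hMcont hMcont (fun z hz => hMmem z hz)
  -- the fixed-point set of M in the ball
  set F : Set ℂ := {z : ℂ | z ∈ Metric.ball (0 : ℂ) 1 ∧ M z = z} with hF
  have hFc : F.Countable := by
    set p : Polynomial ℂ := Polynomial.C (c * b) * Polynomial.X ^ 2
      + Polynomial.C (1 - c) * Polynomial.X - Polynomial.C a₁ with hp
    have hp0 : p ≠ 0 := by
      have hco : p.coeff 2 = c * b := by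
        rw [hp, Polynomial.coeff_sub, Polynomial.coeff_add, Polynomial.coeff_C_mul,
          Polynomial.coeff_C_mul, Polynomial.coeff_X_pow]
        simp [Polynomial.coeff_C, Polynomial.coeff_X]
      intro h
      rw [h, Polynomial.coeff_zero] at hco
      exact (mul_ne_zero hc0 hb0) hco.symm
    refine Set.Finite.countable (Set.Finite.subset (Polynomial.finite_setOf_isRoot hp0) ?_)
    rintro x ⟨hx1, hx2⟩
    have hx1' : ‖x‖ < 1 := (hmem x).mp hx1
    rw [hM, div_eq_iff (hez x hx1')] at hx2
    simp only [Set.mem_setOf_eq, Polynomial.IsRoot.def, hp, Polynomial.eval_sub,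
      Polynomial.eval_add, Polynomial.eval_mul, Polynomial.eval_pow, Polynomial.eval_C,
      Polynomial.eval_X]
    linear_combination -hx2 + a₁ * h1
  set S : Set ℂ := Metric.ball (0 : ℂ) 1 \ F with hS
  have hSball : S ⊆ Metric.ball (0 : ℂ) 1 := Set.diff_subset
  have hSpc : IsPreconnected S := by
    have hrank : 1 < Module.rank ℝ ℂ := by rw [rank_real_complex]; norm_num
    set e := (Homeomorph.unitBall : ℂ ≃ₜ Metric.ball (0 : ℂ) 1) with he
    have hGc : ((fun x : ℂ => (e x : ℂ)) ⁻¹' F).Countable :=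
      hFc.preimage (Subtype.val_injective.comp e.injective)
    have hpc := (hGc.isPathConnected_compl_of_one_lt_rank hrank).image
      (f := fun x : ℂ => (e x : ℂ)) (continuous_subtype_val.comp e.continuous)
    have himg : (fun x : ℂ => (e x : ℂ)) '' ((fun x : ℂ => (e x : ℂ)) ⁻¹' F)ᶜ = S := by
      ext y
      constructor
      · rintro ⟨x, hx, rfl⟩
        exact ⟨(e x).2, hx⟩
      · rintro ⟨hy1, hy2⟩
        refine ⟨e.symm ⟨y, hy1⟩, ?_, ?_⟩
        · simp only [Set.mem_compl_iff, Set.mem_preimage, Homeomorph.apply_symm_apply]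
          exact hy2
        · simp only [Homeomorph.apply_symm_apply]
    rw [himg] at hpc
    exact hpc.isConnected.isPreconnected
  have h0S : (0 : ℂ) ∈ S := by
    refine ⟨hball0, ?_⟩
    intro h0F
    have : a₁ = 0 := by rw [← hM0]; exact h0F.2
    exact ha₁0 this
  haveI hpcs : PreconnectedSpace ↥S := Subtype.preconnectedSpace hSpc
  -- pointwise facts on S
  have hfix1 : ∀ x : ↥S, M ↑x ≠ (↑x : ℂ) := fun x h => x.2.2 ⟨hSball x.2, h⟩
  have hfix2 : ∀ x : ↥S, M (M ↑x) ≠ (↑x : ℂ) := by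
    intro x h
    have h' := congrArg M h
    rw [hM3 ↑x (hSball x.2)] at h'
    exact hfix1 x h'.symm
  have hfix12 : ∀ x : ↥S, M ↑x ≠ M (M ↑x) := by
    intro x h
    have h' := congrArg M h
    rw [hM3 ↑x (hSball x.2)] at h'
    exact hfix2 x h'
  -- the three agreement sets
  set T0 : Set ↥S := {x : ↥S | N ↑x = (↑x : ℂ)} with hT0
  set T1 : Set ↥S := {x : ↥S | N ↑x = M ↑x} with hT1
  set T2 : Set ↥S := {x : ↥S | N ↑x = M (M ↑x)} with hT2
  have cN : Continuous (fun x : ↥S => N ↑x) := (hNc.mono hSball).restrict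
  have c0 : Continuous (fun x : ↥S => (↑x : ℂ)) := continuous_subtype_val
  have c1 : Continuous (fun x : ↥S => M ↑x) := (hMcont.mono hSball).restrict
  have c2 : Continuous (fun x : ↥S => M (M ↑x)) := (hMMcont.mono hSball).restrict
  have hcT0 : IsClosed T0 := isClosed_eq cN c0
  have hcT1 : IsClosed T1 := isClosed_eq cN c1
  have hcT2 : IsClosed T2 := isClosed_eq cN c2
  have hcover : ∀ x : ↥S, x ∈ T0 ∪ T1 ∪ T2 := by
    intro x
    rcases hfiber ↑x (hSball x.2) (N ↑x) (hNm (hSball x.2)) (hNB ↑x (hSball x.2)) with h | h | h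
    · exact Or.inl (Or.inl h)
    · exact Or.inl (Or.inr h)
    · exact Or.inr h
  have hoT0 : IsOpen T0 := by
    have : T0 = (T1 ∪ T2)ᶜ := by
      ext x
      simp only [Set.mem_union, Set.mem_compl_iff, hT0, hT1, hT2, Set.mem_setOf_eq]
      constructor
      · intro h
        push_neg
        exact ⟨fun h1 => hfix1 x (h1.symm.trans h), fun h2 => hfix2 x (h2.symm.trans h)⟩
      · intro h
        rcases hcover x with (h' | h') | h'
        · exact h'
        · exact absurd h' (not_or.mp h).1
        · exact absurd h' (not_or.mp h).2
    rw [this]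
    exact (hcT1.union hcT2).isOpen_compl
  have hoT1 : IsOpen T1 := by
    have : T1 = (T0 ∪ T2)ᶜ := by
      ext x
      simp only [Set.mem_union, Set.mem_compl_iff, hT0, hT1, hT2, Set.mem_setOf_eq]
      constructor
      · intro h
        push_neg
        exact ⟨fun h0 => hfix1 x (h.symm.trans h0), fun h2 => hfix12 x (h.symm.trans h2)⟩
      · intro h
        rcases hcover x with (h' | h') | h'
        · exact absurd h' (not_or.mp h).1
        · exact h'
        · exact absurd h' (not_or.mp h).2
    rw [this]
    exact (hcT0.union hcT2).isOpen_compl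
  have hoT2 : IsOpen T2 := by
    have : T2 = (T0 ∪ T1)ᶜ := by
      ext x
      simp only [Set.mem_union, Set.mem_compl_iff, hT0, hT1, hT2, Set.mem_setOf_eq]
      constructor
      · intro h
        push_neg
        exact ⟨fun h0 => hfix2 x (h.symm.trans h0), fun h1 => hfix12 x (h.symm.trans h1).symm⟩
      · intro h
        rcases hcover x with (h' | h') | h'
        · exact absurd h' (not_or.mp h).1
        · exact absurd h' (not_or.mp h).2
        · exact h'
    rw [this]
    exact (hcT0.union hcT1).isOpen_compl
  -- each T_i is empty or everything
  have halt0 := isClopen_iff.mp ⟨hcT0, hoT0⟩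
  have halt1 := isClopen_iff.mp ⟨hcT1, hoT1⟩
  have halt2 := isClopen_iff.mp ⟨hcT2, hoT2⟩
  -- at points of F everything collapses
  have hFcollapse : ∀ z ∈ Metric.ball (0 : ℂ) 1, z ∈ F → ∀ j : ℕ, N z = M^[j] z := by
    intro z hz hzF j
    have hMz : M z = z := hzF.2
    have hit : M^[j] z = z := by
      induction j with
      | zero => simp
      | succ n ih => rw [Function.iterate_succ_apply', ih, hMz]
    rw [hit]
    rcases hfiber z hz (N z) (hNm hz) (hNB z hz) with h | h | h
    · exact h
    · rw [hMz] at h; exact h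
    · rw [hMz, hMz] at h; exact h
  set x0 : ↥S := ⟨0, h0S⟩ with hx0
  rcases hcover x0 with (hx | hx) | hx
  · -- N = id on S
    refine ⟨0, ?_⟩
    intro z hz
    simp only [Function.iterate_zero, id_eq]
    by_cases hzF : z ∈ F
    · have := hFcollapse z hz hzF 0
      simpa using this
    · have hzS : z ∈ S := ⟨hz, hzF⟩
      have hT0u : T0 = Set.univ := halt0.resolve_left (fun h => by rw [h] at hx; exact hx)
      have : (⟨z, hzS⟩ : ↥S) ∈ T0 := hT0u ▸ Set.mem_univ _
      exact this
  · -- N = M on S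
    refine ⟨1, ?_⟩
    intro z hz
    simp only [Function.iterate_one]
    by_cases hzF : z ∈ F
    · have := hFcollapse z hz hzF 1
      simpa using this
    · have hzS : z ∈ S := ⟨hz, hzF⟩
      have hT1u : T1 = Set.univ := halt1.resolve_left (fun h => by rw [h] at hx; exact hx)
      have : (⟨z, hzS⟩ : ↥S) ∈ T1 := hT1u ▸ Set.mem_univ _
      exact this
  · -- N = M ∘ M on S
    refine ⟨2, ?_⟩
    intro z hz
    show N z = M (M z)
    by_cases hzF : z ∈ F
    · have h2' := hFcollapse z hz hzF 2
      rw [h2']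
      rfl
    · have hzS : z ∈ S := ⟨hz, hzF⟩
      have hT2u : T2 = Set.univ := halt2.resolve_left (fun h => by rw [h] at hx; exact hx)
      have : (⟨z, hzS⟩ : ↥S) ∈ T2 := hT2u ▸ Set.mem_univ _
      exact this
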